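/- Let Γ₁ = C_{(1,−4)} be the image of φ : ℙ¹(ℂ) → ℙ³(ℂ), [x:y] ↦ [x⁵ : x⁴y − 4x²y³ : −4x³y² + xy⁴ : y⁵]. For [λ:μ] ∈ ℙ¹(ℂ), the set T_{[λ:μ]} = {t ∈ ℙ¹(ℂ) : φ(t) ∈ L_{[λ:μ]}} satisfies: T_{[1:1]} has exactly 4 elements; T_{[λ:μ]} has exactly 2 elements if [λ:μ] ∈ {[0:1], [3:1], [−5:1]}; and T_{[λ:μ]} is empty for all other [λ:μ]. In particular, a G-invariant line L_{[λ:μ]} ≠ L_{[1:1]} is either disjoint from Γ₁ or meets Γ₁ in precisely two points, and L_{[1:1]} meets Γ₁ in four points. -/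
import Mathlib


noncomputable section

/-- Projective 3-space over ℂ. -/
abbrev P3 := Projectivization ℂ (Fin 4 → ℂ)

/-- Projective line over ℂ. -/
abbrev P1 := Projectivization ℂ (Fin 2 → ℂ)

/-- Homogeneous coordinates of φ([x:y]) = [x⁵ : x⁴y − 4x²y³ : −4x³y² + xy⁴ : y⁵]
(the parametrization φ_{a,b} with (a,b) = (1,−4)). -/
def phiVec (x y : ℂ) : Fin 4 → ℂ :=
  ![x ^ 5, x ^ 4 * y - 4 * x ^ 2 * y ^ 3, -4 * x ^ 3 * y ^ 2 + x * y ^ 4, y ^ 5]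

lemma phiVec_rep_ne_zero (t : P1) : phiVec (t.rep 0) (t.rep 1) ≠ 0 := by
  intro h
  apply t.rep_nonzero
  have h0 := congrFun h 0
  have h3 := congrFun h 3
  simp [phiVec] at h0 h3
  funext i
  fin_cases i
  · simpa using h0
  · simpa using h3

/-- The map φ : ℙ¹ → ℙ³ with image the rational quintic Γ₁ = C_{(1,−4)}. -/
def phiP (t : P1) : P3 :=
  Projectivization.mk ℂ (phiVec (t.rep 0) (t.rep 1)) (phiVec_rep_ne_zero t)

/-- The line L_{[λ:μ]} = {λx₀ + μx₂ = 0, λx₃ + μx₁ = 0} ⊂ ℙ³. -/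
def lineLM (l m : ℂ) : Set P3 :=
  {p : P3 | l * p.rep 0 + m * p.rep 2 = 0 ∧ l * p.rep 3 + m * p.rep 1 = 0}

/-- T_{[λ:μ]} = {t ∈ ℙ¹ : φ(t) ∈ L_{[λ:μ]}}. -/
def secSet (l m : ℂ) : Set P1 := {t : P1 | phiP t ∈ lineLM l m}

-- ### auxiliary lemmas

/-- The incidence condition in coordinates. -/
def Econd (l m x y : ℂ) : Prop :=
  l * x ^ 5 + m * (-4 * x ^ 3 * y ^ 2 + x * y ^ 4) = 0 ∧
    l * y ^ 5 + m * (x ^ 4 * y - 4 * x ^ 2 * y ^ 3) = 0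

lemma mem_secSet_iff (l m : ℂ) (t : P1) :
    t ∈ secSet l m ↔ Econd l m (t.rep 0) (t.rep 1) := by
  obtain ⟨a, ha⟩ := Projectivization.exists_smul_eq_mk_rep ℂ
    (phiVec (t.rep 0) (t.rep 1)) (phiVec_rep_ne_zero t)
  have hrep : ∀ i, (phiP t).rep i = (a : ℂ) * phiVec (t.rep 0) (t.rep 1) i := by
    intro i
    rw [show (phiP t).rep = a • phiVec (t.rep 0) (t.rep 1) from ha.symm]
    simp [Units.smul_def]
  have key : ∀ i j, (l * (phiP t).rep i + m * (phiP t).rep j = 0 ↔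
      l * phiVec (t.rep 0) (t.rep 1) i + m * phiVec (t.rep 0) (t.rep 1) j = 0) := by
    intro i j
    rw [hrep i, hrep j]
    constructor
    · intro hh
      have : (a : ℂ) * (l * phiVec (t.rep 0) (t.rep 1) i + m * phiVec (t.rep 0) (t.rep 1) j) = 0 := by
        linear_combination hh
      exact (mul_eq_zero.mp this).resolve_left a.ne_zero
    · intro hh
      linear_combination (a : ℂ) * hh
  show (_ ∧ _) ↔ _
  rw [key 0 2, key 3 1]
  simp [phiVec, Econd]

lemma vec2_ne_zero {a b : ℂ} (h : ¬(a = 0 ∧ b = 0)) : (![a, b] : Fin 2 → ℂ) ≠ 0 := by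
  intro hz
  exact h ⟨by simpa using congrFun hz 0, by simpa using congrFun hz 1⟩

lemma mk2_eq_iff (a b c d : ℂ) (h1 : (![a, b] : Fin 2 → ℂ) ≠ 0)
    (h2 : (![c, d] : Fin 2 → ℂ) ≠ 0) :
    Projectivization.mk ℂ ![a, b] h1 = Projectivization.mk ℂ ![c, d] h2 ↔ a * d = b * c := by
  rw [Projectivization.mk_eq_mk_iff]
  constructor
  · rintro ⟨u, hu⟩
    have ha := congrFun hu 0
    have hb := congrFun hu 1
    simp [Units.smul_def] at ha hb
    rw [← ha, ← hb]; ring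
  · intro hcr
    by_cases hc : c = 0
    · subst hc
      have hd : d ≠ 0 := by
        intro hd; exact h2 (by funext i; fin_cases i <;> simp [hd])
      have ha : a = 0 := by
        have h' : a * d = 0 := by rw [hcr]; ring
        exact (mul_eq_zero.mp h').resolve_right hd
      have hb : b ≠ 0 := by
        intro hb; exact h1 (by funext i; fin_cases i <;> simp [ha, hb])
      refine ⟨Units.mk0 (b / d) (div_ne_zero hb hd), ?_⟩
      funext i; fin_cases i
      · simp [Units.smul_def, ha]
      · simp [Units.smul_def]
        field_simp
    · have hane : a ≠ 0 := by
        intro ha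
        rw [ha, zero_mul] at hcr
        have hb0 := (mul_eq_zero.mp hcr.symm).resolve_right hc
        exact h1 (by funext i; fin_cases i <;> simp [ha, hb0])
      refine ⟨Units.mk0 (a / c) (div_ne_zero hane hc), ?_⟩
      funext i; fin_cases i
      · simp [Units.smul_def]
        field_simp
      · simp [Units.smul_def]
        field_simp
        linear_combination hcr

lemma rep2_ne (t : P1) : ¬(t.rep 0 = 0 ∧ t.rep 1 = 0) := by
  rintro ⟨h0, h1⟩
  exact t.rep_nonzero (by funext i; fin_cases i <;> simpa [h0, h1])

lemma eq_mk_rep (t : P1) : t = Projectivization.mk ℂ ![t.rep 0, t.rep 1] (vec2_ne_zero (rep2_ne t)) := by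
  have hv : (![t.rep 0, t.rep 1] : Fin 2 → ℂ) = t.rep := by
    funext i; fin_cases i <;> rfl
  rw [← Projectivization.mk_rep t, Projectivization.mk_eq_mk_iff]
  exact ⟨1, by simp [hv]⟩

lemma mem_secSet_mk (l m x y : ℂ) (hxy : (![x, y] : Fin 2 → ℂ) ≠ 0) :
    Projectivization.mk ℂ ![x, y] hxy ∈ secSet l m ↔ Econd l m x y := by
  set t := Projectivization.mk ℂ ![x, y] hxy with ht
  obtain ⟨a, ha⟩ := Projectivization.exists_smul_eq_mk_rep ℂ ![x, y] hxy
  have h0 : t.rep 0 = (a : ℂ) * x := by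
    rw [show t.rep = a • ![x, y] from ha.symm]; simp [Units.smul_def]
  have h1 : t.rep 1 = (a : ℂ) * y := by
    rw [show t.rep = a • ![x, y] from ha.symm]; simp [Units.smul_def]
  rw [mem_secSet_iff, h0, h1]
  have hane := a.ne_zero
  constructor
  · rintro ⟨e1, e2⟩
    constructor
    · have : (a : ℂ) ^ 5 * (l * x ^ 5 + m * (-4 * x ^ 3 * y ^ 2 + x * y ^ 4)) = 0 := by
        linear_combination e1
      exact (mul_eq_zero.mp this).resolve_left (pow_ne_zero 5 hane)
    · have : (a : ℂ) ^ 5 * (l * y ^ 5 + m * (x ^ 4 * y - 4 * x ^ 2 * y ^ 3)) = 0 := by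
        linear_combination e2
      exact (mul_eq_zero.mp this).resolve_left (pow_ne_zero 5 hane)
  · rintro ⟨e1, e2⟩
    exact ⟨by linear_combination (a:ℂ)^5 * e1, by linear_combination (a:ℂ)^5 * e2⟩

lemma secSet_smul (c l m : ℂ) (hc : c ≠ 0) : secSet (c * l) (c * m) = secSet l m := by
  ext t
  rw [mem_secSet_iff, mem_secSet_iff]
  constructor
  · rintro ⟨e1, e2⟩
    constructor
    · have : c * (l * (t.rep 0) ^ 5 + m * (-4 * (t.rep 0) ^ 3 * (t.rep 1) ^ 2 + (t.rep 0) * (t.rep 1) ^ 4)) = 0 := by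
        linear_combination e1
      exact (mul_eq_zero.mp this).resolve_left hc
    · have : c * (l * (t.rep 1) ^ 5 + m * ((t.rep 0) ^ 4 * (t.rep 1) - 4 * (t.rep 0) ^ 2 * (t.rep 1) ^ 3)) = 0 := by
        linear_combination e2
      exact (mul_eq_zero.mp this).resolve_left hc
  · rintro ⟨e1, e2⟩
    exact ⟨by linear_combination c * e1, by linear_combination c * e2⟩

lemma encard4 {α : Type*} {a b c d : α} (hab : a ≠ b) (hac : a ≠ c) (had : a ≠ d)
    (hbc : b ≠ c) (hbd : b ≠ d) (hcd : c ≠ d) : ({a, b, c, d} : Set α).encard = 4 := by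
  rw [Set.encard_insert_of_notMem (by simp [hab, hac, had]),
    Set.encard_insert_of_notMem (by simp [hbc, hbd]), Set.encard_pair hcd]
  rfl

-- ### the case [0:1]

lemma neA : (![(1:ℂ), 0] : Fin 2 → ℂ) ≠ 0 := vec2_ne_zero (fun h => one_ne_zero h.1)
lemma neB : (![(0:ℂ), 1] : Fin 2 → ℂ) ≠ 0 := vec2_ne_zero (fun h => one_ne_zero h.2)

lemma case01 : (secSet 0 1).encard = 2 := by
  have hset : secSet 0 1 = {Projectivization.mk ℂ ![1, 0] neA, Projectivization.mk ℂ ![0, 1] neB} := by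
    ext t
    constructor
    · intro ht
      obtain ⟨e1, e2⟩ := (mem_secSet_iff 0 1 t).mp ht
      have hne := rep2_ne t
      set x := t.rep 0 with hxdef
      set y := t.rep 1 with hydef
      have hxy : x = 0 ∨ y = 0 := by
        by_contra hc
        push_neg at hc
        obtain ⟨hx, hy⟩ := hc
        have p1 : x * (y ^ 2 * (y ^ 2 - 4 * x ^ 2)) = 0 := by linear_combination e1
        have p2 : y * (x ^ 2 * (x ^ 2 - 4 * y ^ 2)) = 0 := by linear_combination e2
        have d1 : y ^ 2 - 4 * x ^ 2 = 0 :=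
          ((mul_eq_zero.mp ((mul_eq_zero.mp p1).resolve_left hx)).resolve_left
            (pow_ne_zero 2 hy))
        have d2 : x ^ 2 - 4 * y ^ 2 = 0 :=
          ((mul_eq_zero.mp ((mul_eq_zero.mp p2).resolve_left hy)).resolve_left
            (pow_ne_zero 2 hx))
        have : x ^ 2 = 0 := by linear_combination (-4 * d1 - d2) / 15
        exact hx (pow_eq_zero_iff two_ne_zero |>.mp this)
      rcases hxy with hx | hy
      · right
        rw [eq_mk_rep t, Set.mem_singleton_iff, mk2_eq_iff]
        simp [← hxdef, ← hydef, hx]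
      · left
        rw [eq_mk_rep t, mk2_eq_iff]
        simp [← hxdef, ← hydef, hy]
    · intro ht
      rcases ht with ht | ht <;> rw [ht, mem_secSet_mk] <;> norm_num [Econd]
  rw [hset]
  exact Set.encard_pair (by rw [Ne, mk2_eq_iff]; norm_num)

-- ### the case [3:1]

lemma neC : (![(1:ℂ), 1] : Fin 2 → ℂ) ≠ 0 := vec2_ne_zero (fun h => one_ne_zero h.1)
lemma neD : (![(-1:ℂ), 1] : Fin 2 → ℂ) ≠ 0 := vec2_ne_zero (fun h => one_ne_zero h.2)

lemma case31 : (secSet 3 1).encard = 2 := by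
  have hset : secSet 3 1 = {Projectivization.mk ℂ ![1, 1] neC, Projectivization.mk ℂ ![-1, 1] neD} := by
    ext t
    constructor
    · intro ht
      obtain ⟨e1, e2⟩ := (mem_secSet_iff 3 1 t).mp ht
      have hne := rep2_ne t
      set x := t.rep 0 with hxdef
      set y := t.rep 1 with hydef
      have hx : x ≠ 0 := by
        intro hx
        rw [hx] at e2
        have hy5 : y ^ 5 = 0 := by linear_combination e2 / 3
        exact hne ⟨hx, pow_eq_zero_iff (by norm_num : (5:ℕ) ≠ 0) |>.mp hy5⟩
      have hy : y ≠ 0 := by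
        intro hy
        rw [hy] at e1
        have hx5 : x ^ 5 = 0 := by linear_combination e1 / 3
        exact hne ⟨pow_eq_zero_iff (by norm_num : (5:ℕ) ≠ 0) |>.mp hx5, hy⟩
      have hP : 3 * x ^ 4 - 4 * x ^ 2 * y ^ 2 + y ^ 4 = 0 := by
        have p : x * (3 * x ^ 4 - 4 * x ^ 2 * y ^ 2 + y ^ 4) = 0 := by linear_combination e1
        exact (mul_eq_zero.mp p).resolve_left hx
      have hQ : 3 * y ^ 4 + x ^ 4 - 4 * x ^ 2 * y ^ 2 = 0 := by
        have p : y * (3 * y ^ 4 + x ^ 4 - 4 * x ^ 2 * y ^ 2) = 0 := by linear_combination e2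
        exact (mul_eq_zero.mp p).resolve_left hy
      have h44 : x ^ 4 - y ^ 4 = 0 := by linear_combination (hP - hQ) / 2
      have h22 : x ^ 2 - y ^ 2 = 0 := by
        have p : x ^ 2 * (x ^ 2 - y ^ 2) = 0 := by linear_combination (hP + h44) / 4
        exact (mul_eq_zero.mp p).resolve_left (pow_ne_zero 2 hx)
      have hfac : (x - y) * (x + y) = 0 := by linear_combination h22
      rcases mul_eq_zero.mp hfac with hc | hc
      · left
        rw [eq_mk_rep t, mk2_eq_iff]
        simp only [← hxdef, ← hydef, mul_one]
        linear_combination hc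
      · right
        rw [eq_mk_rep t, Set.mem_singleton_iff, mk2_eq_iff]
        simp only [← hxdef, ← hydef, mul_one, mul_neg]
        linear_combination hc
    · intro ht
      rcases ht with ht | ht <;> rw [ht, mem_secSet_mk] <;> norm_num [Econd]
  rw [hset]
  exact Set.encard_pair (by rw [Ne, mk2_eq_iff]; norm_num)

-- ### the case [-5:1]

lemma neE : (![Complex.I, 1] : Fin 2 → ℂ) ≠ 0 := vec2_ne_zero (fun h => one_ne_zero h.2)
lemma neF : (![-Complex.I, 1] : Fin 2 → ℂ) ≠ 0 := vec2_ne_zero (fun h => one_ne_zero h.2)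

lemma caseM51 : (secSet (-5) 1).encard = 2 := by
  have hset : secSet (-5) 1 =
      {Projectivization.mk ℂ ![Complex.I, 1] neE, Projectivization.mk ℂ ![-Complex.I, 1] neF} := by
    ext t
    constructor
    · intro ht
      obtain ⟨e1, e2⟩ := (mem_secSet_iff (-5) 1 t).mp ht
      have hne := rep2_ne t
      set x := t.rep 0 with hxdef
      set y := t.rep 1 with hydef
      have hx : x ≠ 0 := by
        intro hx
        rw [hx] at e2
        have hy5 : y ^ 5 = 0 := by linear_combination -e2 / 5
        exact hne ⟨hx, pow_eq_zero_iff (by norm_num : (5:ℕ) ≠ 0) |>.mp hy5⟩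
      have hy : y ≠ 0 := by
        intro hy
        rw [hy] at e1
        have hx5 : x ^ 5 = 0 := by linear_combination -e1 / 5
        exact hne ⟨pow_eq_zero_iff (by norm_num : (5:ℕ) ≠ 0) |>.mp hx5, hy⟩
      have hP : -5 * x ^ 4 - 4 * x ^ 2 * y ^ 2 + y ^ 4 = 0 := by
        have p : x * (-5 * x ^ 4 - 4 * x ^ 2 * y ^ 2 + y ^ 4) = 0 := by linear_combination e1
        exact (mul_eq_zero.mp p).resolve_left hx
      have hQ : -5 * y ^ 4 + x ^ 4 - 4 * x ^ 2 * y ^ 2 = 0 := by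
        have p : y * (-5 * y ^ 4 + x ^ 4 - 4 * x ^ 2 * y ^ 2) = 0 := by linear_combination e2
        exact (mul_eq_zero.mp p).resolve_left hy
      have h44 : x ^ 4 - y ^ 4 = 0 := by linear_combination -(hP - hQ) / 6
      have h22 : x ^ 2 + y ^ 2 = 0 := by
        have p : x ^ 2 * (x ^ 2 + y ^ 2) = 0 := by linear_combination -(hP + h44) / 4
        exact (mul_eq_zero.mp p).resolve_left (pow_ne_zero 2 hx)
      have hfac : (x - Complex.I * y) * (x + Complex.I * y) = 0 := by
        linear_combination h22 - y ^ 2 * Complex.I_sq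
      rcases mul_eq_zero.mp hfac with hc | hc
      · left
        rw [eq_mk_rep t, mk2_eq_iff]
        simp only [← hxdef, ← hydef, mul_one]
        linear_combination hc
      · right
        rw [eq_mk_rep t, Set.mem_singleton_iff, mk2_eq_iff]
        simp only [← hxdef, ← hydef, mul_one, mul_neg]
        linear_combination hc
    · intro ht
      rcases ht with ht | ht <;> rw [ht, mem_secSet_mk] <;>
        refine ⟨?_, ?_⟩
      · linear_combination (-5 * Complex.I ^ 3 + Complex.I) * Complex.I_sq
      · linear_combination (Complex.I ^ 2 - 5) * Complex.I_sq
      · linear_combination (5 * Complex.I ^ 3 - Complex.I) * Complex.I_sq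
      · linear_combination (Complex.I ^ 2 - 5) * Complex.I_sq
  rw [hset]
  refine Set.encard_pair ?_
  rw [Ne, mk2_eq_iff]
  simp only [mul_one, one_mul]
  intro hc
  have : Complex.I = 0 := by linear_combination hc / 2
  exact Complex.I_ne_zero this

-- ### the case [1:1]

/-- α = √(2+√3), a root of α⁴ − 4α² + 1 = 0. -/
def alC : ℂ := (Real.sqrt (2 + Real.sqrt 3) : ℂ)
def sC : ℂ := (Real.sqrt 3 : ℂ)

lemma hsC : sC ^ 2 = 3 := by
  have : Real.sqrt 3 ^ 2 = 3 := Real.sq_sqrt (by norm_num)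
  unfold sC
  exact_mod_cast this

lemma halC : alC ^ 2 = 2 + sC := by
  have : Real.sqrt (2 + Real.sqrt 3) ^ 2 = 2 + Real.sqrt 3 :=
    Real.sq_sqrt (by positivity)
  unfold alC sC
  rw [← Complex.ofReal_pow, this]
  push_cast
  ring

lemma halC0 : alC ≠ 0 := by
  unfold alC
  rw [Ne, Complex.ofReal_eq_zero]
  positivity

lemma hsC_ne1 : sC ≠ -1 := by
  intro hc
  unfold sC at hc
  have : Real.sqrt 3 = -1 := by exact_mod_cast hc
  linarith [Real.sqrt_nonneg 3]

lemma hsC_ne3 : sC ≠ -3 := by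
  intro hc
  unfold sC at hc
  have : Real.sqrt 3 = -3 := by exact_mod_cast hc
  linarith [Real.sqrt_nonneg 3]

lemma neG : (![alC, 1] : Fin 2 → ℂ) ≠ 0 := vec2_ne_zero (fun h => one_ne_zero h.2)
lemma neH : (![-alC, 1] : Fin 2 → ℂ) ≠ 0 := vec2_ne_zero (fun h => one_ne_zero h.2)
lemma neI : (![(1:ℂ), alC] : Fin 2 → ℂ) ≠ 0 := vec2_ne_zero (fun h => one_ne_zero h.1)
lemma neJ : (![(-1:ℂ), alC] : Fin 2 → ℂ) ≠ 0 := vec2_ne_zero (fun h => by exact one_ne_zero (neg_eq_zero.mp h.1))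

lemma case11 : (secSet 1 1).encard = 4 := by
  have hal2_ne1 : alC ^ 2 ≠ 1 := by
    rw [halC]
    intro hc
    exact hsC_ne1 (by linear_combination hc)
  have hal2_neM1 : alC ^ 2 ≠ -1 := by
    rw [halC]
    intro hc
    exact hsC_ne3 (by linear_combination hc)
  have hset : secSet 1 1 =
      {Projectivization.mk ℂ ![alC, 1] neG, Projectivization.mk ℂ ![-alC, 1] neH,
       Projectivization.mk ℂ ![1, alC] neI, Projectivization.mk ℂ ![-1, alC] neJ} := by
    ext t
    constructor
    · intro ht
      obtain ⟨e1, e2⟩ := (mem_secSet_iff 1 1 t).mp ht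
      have hne := rep2_ne t
      set x := t.rep 0 with hxdef
      set y := t.rep 1 with hydef
      have hx : x ≠ 0 := by
        intro hx
        rw [hx] at e2
        have hy5 : y ^ 5 = 0 := by linear_combination e2
        exact hne ⟨hx, pow_eq_zero_iff (by norm_num : (5:ℕ) ≠ 0) |>.mp hy5⟩
      have hy : y ≠ 0 := by
        intro hy
        rw [hy] at e1
        have hx5 : x ^ 5 = 0 := by linear_combination e1
        exact hne ⟨pow_eq_zero_iff (by norm_num : (5:ℕ) ≠ 0) |>.mp hx5, hy⟩
      have hP : x ^ 4 - 4 * x ^ 2 * y ^ 2 + y ^ 4 = 0 := by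
        have p : x * (x ^ 4 - 4 * x ^ 2 * y ^ 2 + y ^ 4) = 0 := by linear_combination e1
        exact (mul_eq_zero.mp p).resolve_left hx
      have hquad : (x ^ 2 - (2 + sC) * y ^ 2) * (x ^ 2 - (2 - sC) * y ^ 2) = 0 := by
        linear_combination hP - y ^ 4 * hsC
      rcases mul_eq_zero.mp hquad with hc | hc
      · -- x² = (2+s)y² = α²y²
        have hfac : (x - alC * y) * (x + alC * y) = 0 := by
          linear_combination hc - y ^ 2 * halC
        rcases mul_eq_zero.mp hfac with hd | hd
        · left
          rw [eq_mk_rep t, mk2_eq_iff]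
          simp only [← hxdef, ← hydef, mul_one]
          linear_combination hd
        · right; left
          rw [eq_mk_rep t, mk2_eq_iff]
          simp only [← hxdef, ← hydef, mul_one, mul_neg]
          linear_combination hd
      · -- α²x² = y²
        have hfac : (alC * x - y) * (alC * x + y) = 0 := by
          linear_combination (2 + sC) * hc + x ^ 2 * halC - y ^ 2 * hsC
        rcases mul_eq_zero.mp hfac with hd | hd
        · right; right; left
          rw [eq_mk_rep t, mk2_eq_iff]
          simp only [← hxdef, ← hydef, mul_one, one_mul]
          linear_combination hd
        · right; right; right
          rw [eq_mk_rep t, Set.mem_singleton_iff, mk2_eq_iff]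
          simp only [← hxdef, ← hydef, mul_neg, one_mul, mul_one]
          linear_combination hd
    · intro ht
      rcases ht with ht | ht | ht | ht <;> rw [ht, mem_secSet_mk] <;> refine ⟨?_, ?_⟩
      · linear_combination (alC ^ 3 + (sC - 2) * alC) * halC + alC * hsC
      · linear_combination (alC ^ 2 + sC - 2) * halC + hsC
      · linear_combination (-alC ^ 3 - (sC - 2) * alC) * halC - alC * hsC
      · linear_combination (alC ^ 2 + sC - 2) * halC + hsC
      · linear_combination (alC ^ 2 + sC - 2) * halC + hsC
      · linear_combination (alC ^ 3 + (sC - 2) * alC) * halC + alC * hsC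
      · linear_combination (-alC ^ 2 - sC + 2) * halC - hsC
      · linear_combination (alC ^ 3 + (sC - 2) * alC) * halC + alC * hsC
  rw [hset]
  have hAB : Projectivization.mk ℂ ![alC, 1] neG ≠ Projectivization.mk ℂ ![-alC, 1] neH := by
    rw [Ne, mk2_eq_iff]
    intro hc
    exact halC0 (by linear_combination hc / 2)
  have hAC : Projectivization.mk ℂ ![alC, 1] neG ≠ Projectivization.mk ℂ ![1, alC] neI := by
    rw [Ne, mk2_eq_iff]
    intro hc
    exact hal2_ne1 (by linear_combination hc)
  have hAD : Projectivization.mk ℂ ![alC, 1] neG ≠ Projectivization.mk ℂ ![-1, alC] neJ := by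
    rw [Ne, mk2_eq_iff]
    intro hc
    exact hal2_neM1 (by linear_combination hc)
  have hBC : Projectivization.mk ℂ ![-alC, 1] neH ≠ Projectivization.mk ℂ ![1, alC] neI := by
    rw [Ne, mk2_eq_iff]
    intro hc
    exact hal2_neM1 (by linear_combination -hc)
  have hBD : Projectivization.mk ℂ ![-alC, 1] neH ≠ Projectivization.mk ℂ ![-1, alC] neJ := by
    rw [Ne, mk2_eq_iff]
    intro hc
    exact hal2_ne1 (by linear_combination -hc)
  have hCD : Projectivization.mk ℂ ![1, alC] neI ≠ Projectivization.mk ℂ ![-1, alC] neJ := by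
    rw [Ne, mk2_eq_iff]
    intro hc
    exact halC0 (by linear_combination hc / 2)
  exact encard4 hAB hAC hAD hBC hBD hCD

-- ### the generic (empty) case

lemma caseEmpty (l m : ℂ) (h1 : l ≠ m) (h2 : l ≠ 0) (h3 : l ≠ 3 * m) (h4 : l ≠ -5 * m) :
    secSet l m = ∅ := by
  rw [Set.eq_empty_iff_forall_notMem]
  intro t ht
  obtain ⟨e1, e2⟩ := (mem_secSet_iff l m t).mp ht
  have hne := rep2_ne t
  set x := t.rep 0 with hxdef
  set y := t.rep 1 with hydef
  have hx : x ≠ 0 := by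
    intro hx
    rw [hx] at e2
    have hy : y ≠ 0 := fun hy => hne ⟨hx, hy⟩
    have : l * y ^ 5 = 0 := by linear_combination e2
    exact h2 ((mul_eq_zero.mp this).resolve_right (pow_ne_zero 5 hy))
  have hy : y ≠ 0 := by
    intro hy
    rw [hy] at e1
    have : l * x ^ 5 = 0 := by linear_combination e1
    exact h2 ((mul_eq_zero.mp this).resolve_right (pow_ne_zero 5 hx))
  have hP : l * x ^ 4 - 4 * m * x ^ 2 * y ^ 2 + m * y ^ 4 = 0 := by
    have p : x * (l * x ^ 4 - 4 * m * x ^ 2 * y ^ 2 + m * y ^ 4) = 0 := by linear_combination e1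
    exact (mul_eq_zero.mp p).resolve_left hx
  have hQ : l * y ^ 4 + m * x ^ 4 - 4 * m * x ^ 2 * y ^ 2 = 0 := by
    have p : y * (l * y ^ 4 + m * x ^ 4 - 4 * m * x ^ 2 * y ^ 2) = 0 := by linear_combination e2
    exact (mul_eq_zero.mp p).resolve_left hy
  have h44 : x ^ 4 - y ^ 4 = 0 := by
    have p : (l - m) * (x ^ 4 - y ^ 4) = 0 := by linear_combination hP - hQ
    exact (mul_eq_zero.mp p).resolve_left (sub_ne_zero.mpr h1)
  have h6 : (l + m) * x ^ 2 - 4 * m * y ^ 2 = 0 := by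
    have p : x ^ 2 * ((l + m) * x ^ 2 - 4 * m * y ^ 2) = 0 := by
      linear_combination hP + m * h44
    exact (mul_eq_zero.mp p).resolve_left (pow_ne_zero 2 hx)
  have h22 : (x ^ 2 - y ^ 2) * (x ^ 2 + y ^ 2) = 0 := by linear_combination h44
  rcases mul_eq_zero.mp h22 with hc | hc
  · have p : (l - 3 * m) * y ^ 2 = 0 := by linear_combination h6 - (l + m) * hc
    have := (mul_eq_zero.mp p).resolve_right (pow_ne_zero 2 hy)
    exact h3 (by linear_combination this)
  · have p : (l + 5 * m) * y ^ 2 = 0 := by linear_combination -h6 + (l + m) * hc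
    have := (mul_eq_zero.mp p).resolve_right (pow_ne_zero 2 hy)
    exact h4 (by linear_combination this)

/-- for the quintic Γ₁ = C_{(1,−4)} and the G-invariant lines L_{[λ:μ]}:
T_{[1:1]} has exactly 4 elements (L_{[1:1]} is the quadrisecant); T_{[λ:μ]} has exactly 2
elements for [λ:μ] ∈ {[0:1], [3:1], [−5:1]}; and T_{[λ:μ]} = ∅ for all other [λ:μ]. -/
theorem stmt6 (l m : ℂ) (h : (![l, m] : Fin 2 → ℂ) ≠ 0) :
    (l = m → (secSet l m).encard = 4) ∧
      ((l = 0 ∨ l = 3 * m ∨ l = -5 * m) → (secSet l m).encard = 2) ∧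
      ((l ≠ m ∧ l ≠ 0 ∧ l ≠ 3 * m ∧ l ≠ -5 * m) → secSet l m = ∅) := by
  refine ⟨?_, ?_, ?_⟩
  · intro hlm
    subst hlm
    have hl : l ≠ 0 := by
      intro hl0
      exact h (by funext i; fin_cases i <;> simp [hl0])
    have : secSet l l = secSet 1 1 := by
      have := secSet_smul l 1 1 hl
      simpa using this
    rw [this]
    exact case11
  · rintro (hl | hl | hl)
    · subst hl
      have hm : m ≠ 0 := by
        intro hm0
        exact h (by funext i; fin_cases i <;> simp [hm0])
      have : secSet 0 m = secSet 0 1 := by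
        have := secSet_smul m 0 1 hm
        simpa using this
      rw [this]
      exact case01
    · have hm : m ≠ 0 := by
        intro hm0
        rw [hm0, mul_zero] at hl
        exact h (by funext i; fin_cases i <;> simp [hl, hm0])
      have : secSet l m = secSet 3 1 := by
        have := secSet_smul m 3 1 hm
        rw [mul_comm m 3, ← hl, mul_one] at this
        exact this
      rw [this]
      exact case31
    · have hm : m ≠ 0 := by
        intro hm0
        rw [hm0, mul_zero] at hl
        exact h (by funext i; fin_cases i <;> simp [hl, hm0])
      have : secSet l m = secSet (-5) 1 := by
        have := secSet_smul m (-5) 1 hm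
        rw [mul_comm m (-5), ← hl, mul_one] at this
        exact this
      rw [this]
      exact caseM51
  · rintro ⟨h1, h2, h3, h4⟩
    exact caseEmpty l m h1 h2 h3 h4
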